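/- Let m_1, m_2, m_3, m_4 be nonnegative integers with m_1 + m_3 even, and set D = 2^{m_1}·3^{m_2}·4^{m_3}·5^{m_4}. Then (1/24)·((D − 4·(−1)^{m_4+m_3}·0^{m_2})·(1+(−1)^{m_1+m_3}) + 6·(−1)^{m_2}·0^{m_1+m_3}) = ⌊(D+7)/12⌋, where 0^n = 1 if n = 0 and 0 otherwise. -/

import Mathlib

lemma pow5mod (m : ℕ) : 5^m % 12 = if m % 2 = 0 then 1 else 5 := by
  induction m with
  | zero => rfl
  | succ n ih =>
    rw [pow_succ, Nat.mul_mod, ih]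
    rcases Nat.mod_two_eq_zero_or_one n with h | h <;>
      · norm_num [h]
        omega

lemma pow3mod (m : ℕ) (hm : m ≠ 0) : 3^m % 12 = if m % 2 = 0 then 9 else 3 := by
  induction m with
  | zero => omega
  | succ n ih =>
    rcases Nat.eq_zero_or_pos n with h0 | h0
    · subst h0; rfl
    · rw [pow_succ, Nat.mul_mod, ih (by omega)]
      rcases Nat.mod_two_eq_zero_or_one n with h | h <;>
        · norm_num [h]
          omega

lemma pow2mod (m : ℕ) (hm : 2 ≤ m) : 2^m % 12 = if m % 2 = 0 then 4 else 8 := by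
  induction m with
  | zero => omega
  | succ n ih =>
    rcases Nat.lt_or_ge n 2 with h0 | h0
    · interval_cases n
      · omega
      · rfl
    · rw [pow_succ, Nat.mul_mod, ih h0]
      rcases Nat.mod_two_eq_zero_or_one n with h | h <;>
        · norm_num [h]
          omega

theorem stmt8 (m1 m2 m3 m4 : ℕ) (h : Even (m1 + m3)) :
    (1 / 24 : ℚ) *
        (((2 ^ m1 * 3 ^ m2 * 4 ^ m3 * 5 ^ m4 : ℚ) -
            4 * (-1 : ℚ) ^ (m4 + m3) * (if m2 = 0 then 1 else 0)) *
          (1 + (-1 : ℚ) ^ (m1 + m3)) +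
          6 * (-1 : ℚ) ^ m2 * (if m1 + m3 = 0 then 1 else 0)) =
      (⌊((2 ^ m1 * 3 ^ m2 * 4 ^ m3 * 5 ^ m4 : ℚ) + 7) / 12⌋ : ℤ) := by
  obtain ⟨r, hr⟩ := h
  have h13 : ((-1:ℚ)) ^ (m1+m3) = 1 := Even.neg_one_pow ⟨r, hr⟩
  set N : ℕ := 2^(m1+2*m3) * 3^m2 * 5^m4 with hNdef
  have hN : ((2:ℚ)^m1 * 3^m2 * 4^m3 * 5^m4) = (N:ℚ) := by
    rw [hNdef]; push_cast
    rw [pow_add, pow_mul]; ring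
  rw [h13, hN]
  set q : ℕ := (N+7)/12 with hqdef
  have hfloor : ⌊((N:ℚ) + 7) / 12⌋ = ((q:ℕ) : ℤ) := by
    rw [show ((N:ℚ)+7) = (((N:ℤ)+7 : ℤ) : ℚ) by push_cast; ring,
        show (12:ℚ) = ((12:ℕ):ℚ) by norm_num,
        Rat.floor_intCast_div_natCast]
    omega
  rw [hfloor]
  by_cases h0 : m1 + m3 = 0
  · have hm1 : m1 = 0 := by omega
    have hm3 : m3 = 0 := by omega
    subst hm1; subst hm3
    simp only [if_pos rfl]
    by_cases hm2 : m2 = 0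
    · subst hm2
      have hmod : N % 12 = if m4 % 2 = 0 then 1 else 5 := by
        simpa [hNdef] using pow5mod m4
      simp only [if_pos rfl]
      rcases Nat.mod_two_eq_zero_or_one m4 with h4 | h4
      · have hs : ((-1:ℚ))^(m4+0) = 1 := Even.neg_one_pow (Nat.even_iff.mpr (by omega))
        rw [hs]
        have hq : N + 7 = 12*q + 8 := by rw [hqdef]; simp [h4] at hmod; omega
        have hc : (N:ℚ) + 7 = 12*(q:ℚ) + 8 := by exact_mod_cast hq
        push_cast
        linarith
      · have hs : ((-1:ℚ))^(m4+0) = -1 := Odd.neg_one_pow (Nat.odd_iff.mpr (by omega))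
        rw [hs]
        have hq : N + 7 = 12*q := by rw [hqdef]; simp [h4] at hmod; omega
        have hc : (N:ℚ) + 7 = 12*(q:ℚ) := by exact_mod_cast hq
        push_cast
        linarith
    · simp only [if_neg hm2]
      have hmod : N % 12 = if m2 % 2 = 0 then 9 else 3 := by
        have hN' : N = 3^m2 * 5^m4 := by rw [hNdef]; norm_num
        rw [hN', Nat.mul_mod, pow3mod m2 hm2, pow5mod m4]
        rcases Nat.mod_two_eq_zero_or_one m2 with hp | hp <;>
          rcases Nat.mod_two_eq_zero_or_one m4 with h4 | h4 <;> simp [hp, h4]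
      rcases Nat.mod_two_eq_zero_or_one m2 with hp | hp
      · have hs : ((-1:ℚ))^m2 = 1 := Even.neg_one_pow (Nat.even_iff.mpr hp)
        rw [hs]
        have hq : N + 7 = 12*q + 4 := by rw [hqdef]; simp [hp] at hmod; omega
        have hc : (N:ℚ) + 7 = 12*(q:ℚ) + 4 := by exact_mod_cast hq
        push_cast
        linarith
      · have hs : ((-1:ℚ))^m2 = -1 := Odd.neg_one_pow (Nat.odd_iff.mpr hp)
        rw [hs]
        have hq : N + 7 = 12*q + 10 := by rw [hqdef]; simp [hp] at hmod; omega
        have hc : (N:ℚ) + 7 = 12*(q:ℚ) + 10 := by exact_mod_cast hq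
        push_cast
        linarith
  · simp only [if_neg h0]
    have ha : 2 ≤ m1 + 2*m3 := by omega
    by_cases hm2 : m2 = 0
    · subst hm2
      simp only [if_pos rfl]
      have hmod : N % 12 = if (m3 + m4) % 2 = 0 then 4 else 8 := by
        have hN' : N = 2^(m1+2*m3) * 5^m4 := by rw [hNdef]; norm_num
        rw [hN', Nat.mul_mod, pow2mod _ ha, pow5mod m4]
        rcases Nat.mod_two_eq_zero_or_one m3 with hp | hp <;>
          rcases Nat.mod_two_eq_zero_or_one m4 with h4 | h4 <;>
            · have hap : (m1 + 2*m3) % 2 = m3 % 2 := by omega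
              simp [hap, hp, h4, Nat.add_mod]
      rcases Nat.mod_two_eq_zero_or_one (m3 + m4) with hp | hp
      · have hs : ((-1:ℚ))^(m4+m3) = 1 := Even.neg_one_pow (Nat.even_iff.mpr (by omega))
        rw [hs]
        have hq : N + 7 = 12*q + 11 := by rw [hqdef]; simp [hp] at hmod; omega
        have hc : (N:ℚ) + 7 = 12*(q:ℚ) + 11 := by exact_mod_cast hq
        push_cast
        linarith
      · have hs : ((-1:ℚ))^(m4+m3) = -1 := Odd.neg_one_pow (Nat.odd_iff.mpr (by omega))
        rw [hs]
        have hq : N + 7 = 12*q + 3 := by rw [hqdef]; simp [hp] at hmod; omega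
        have hc : (N:ℚ) + 7 = 12*(q:ℚ) + 3 := by exact_mod_cast hq
        push_cast
        linarith
    · simp only [if_neg hm2]
      have hdvd : 12 ∣ N := by
        rw [hNdef]
        have h4 : (4:ℕ) ∣ 2^(m1+2*m3) := by
          calc (4:ℕ) = 2^2 := by norm_num
          _ ∣ 2^(m1+2*m3) := pow_dvd_pow 2 ha
        have h3 : (3:ℕ) ∣ 3^m2 := dvd_pow_self 3 hm2
        exact Dvd.dvd.mul_right (by exact mul_dvd_mul h4 h3) _
      have hq : N + 7 = 12*q + 7 := by rw [hqdef]; omega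
      have hc : (N:ℚ) + 7 = 12*(q:ℚ) + 7 := by exact_mod_cast hq
      push_cast
      linarith
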